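/- arXiv:2603.27544 — 3 statements merged into one kernel-verified Lean document; each statement's English description precedes it below -/
import Mathlib

section
/- Fix a positive integer K, an index k ∈ {1,…,K}, a vector h ∈ ℂ^N, vectors v_1,…,v_K ∈ ℂ^M, and σ² > 0. For θ ∈ ℝ define the SINR γ(θ) = |h^H G(θ) v_k|² / ( Σ_{i≠k} |h^H G(θ) v_i|² + σ² ). Then γ is differentiable at every θ ∈ ℝ with derivative γ'(θ) = 2 ϱ(θ) · ( γ(θ) · Σ_{i≠k} ψ_i(θ) − ψ_k(θ) ), where ϱ(θ) = 1 / ( Σ_{i≠k} |h^H G(θ) v_i|² + σ² ) and ψ_i(θ) = Im[ e^{iθ} · conj(h^H G(θ) v_i) · ( h^H G_L E_{n,n} G_R v_i ) ] for each i ∈ {1,…,K}. -/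
open Matrix Complex

lemma normSq_hasDerivAt {F : ℝ → ℂ} {F' : ℂ} {θ : ℝ} (hF : HasDerivAt F F' θ) :
    HasDerivAt (fun t => ‖F t‖ ^ 2) (2 * ((starRingEnd ℂ (F θ)) * F').re) θ := by
  have hre : HasDerivAt (fun t => (F t).re) F'.re θ :=
    Complex.reCLM.hasFDerivAt.comp_hasDerivAt θ hF
  have him : HasDerivAt (fun t => (F t).im) F'.im θ :=
    Complex.imCLM.hasFDerivAt.comp_hasDerivAt θ hF
  have := (hre.mul hre).add (him.mul him)
  have heq : (fun t => ‖F t‖ ^ 2) = fun t => (F t).re * (F t).re + (F t).im * (F t).im := by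
    funext t
    simp [Complex.sq_norm, Complex.normSq_apply]
  rw [heq]
  refine HasDerivAt.congr_deriv this ?_
  simp [Complex.mul_re]
  ring

/-- Theorem 1 of the paper: derivative of the per-user SINR with respect to a
single SIM phase shift. -/
theorem sinr_deriv {N M : ℕ} (hN : 0 < N) (hM : 0 < M) (n : Fin N)
    (d : Fin N → ℂ) (Gmat_L : Matrix (Fin N) (Fin N) ℂ) (Gmat_R : Matrix (Fin N) (Fin M) ℂ)
    {K : ℕ} (hK : 0 < K) (k : Fin K) (h : Fin N → ℂ) (v : Fin K → Fin M → ℂ)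
    (σ2 : ℝ) (hσ : 0 < σ2)
    (D : ℝ → Matrix (Fin N) (Fin N) ℂ)
    (hD : ∀ θ, D θ =
      Matrix.diagonal (fun j => if j = n then Complex.exp (θ * Complex.I) else d j))
    (G : ℝ → Matrix (Fin N) (Fin M) ℂ)
    (hG : ∀ θ, G θ = Gmat_L * D θ * Gmat_R)
    (f : Fin K → ℝ → ℂ)
    (hf : ∀ i θ, f i θ = star h ⬝ᵥ (G θ).mulVec (v i))
    (γ : ℝ → ℝ)
    (hγ : ∀ θ, γ θ = ‖f k θ‖ ^ 2 / (∑ i ∈ Finset.univ.erase k, ‖f i θ‖ ^ 2 + σ2))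
    (ϱ : ℝ → ℝ)
    (hϱ : ∀ θ, ϱ θ = 1 / (∑ i ∈ Finset.univ.erase k, ‖f i θ‖ ^ 2 + σ2))
    (ψ : Fin K → ℝ → ℝ)
    (hψ : ∀ i θ, ψ i θ = (Complex.exp (θ * Complex.I) * starRingEnd ℂ (f i θ) *
        (star h ⬝ᵥ (Gmat_L * Matrix.single n n 1 * Gmat_R).mulVec (v i))).im)
    (θ : ℝ) :
    HasDerivAt γ
      (2 * ϱ θ * (γ θ * (∑ i ∈ Finset.univ.erase k, ψ i θ) - ψ k θ)) θ := by
  -- decompose D θ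
  set E : Matrix (Fin N) (Fin N) ℂ := Matrix.single n n 1 with hE
  set C : Matrix (Fin N) (Fin N) ℂ :=
    Matrix.diagonal (fun j => if j = n then 0 else d j) with hC
  have hDdec : ∀ t : ℝ, D t = Complex.exp (t * Complex.I) • E + C := by
    intro t
    rw [hD]
    ext i j
    by_cases hij : i = j
    · subst hij
      by_cases hin : i = n
      · subst hin; simp [hE, hC, Matrix.single_apply_same]
      · simp only [hE, hC, Matrix.add_apply, Matrix.diagonal_apply_eq,
          Matrix.smul_apply, Matrix.single, Matrix.of_apply, if_neg hin,
          smul_eq_mul]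
        rw [if_neg (fun h' => hin ((h' : n = i ∧ n = i).1.symm))]
        simp
    · simp only [hE, hC, Matrix.add_apply, Matrix.diagonal_apply_ne _ hij,
        Matrix.smul_apply, Matrix.single, Matrix.of_apply, smul_eq_mul]
      rw [if_neg (fun h' => hij (((h' : n = i ∧ n = j).1.symm).trans (h' : n = i ∧ n = j).2))]
      simp [Matrix.diagonal_apply_ne _ hij]
  set A : Fin K → ℂ := fun i => star h ⬝ᵥ (Gmat_L * E * Gmat_R).mulVec (v i) with hA
  set B : Fin K → ℂ := fun i => star h ⬝ᵥ (Gmat_L * C * Gmat_R).mulVec (v i) with hB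
  have hfdec : ∀ i (t : ℝ), f i t = Complex.exp (t * Complex.I) * A i + B i := by
    intro i t
    rw [hf, hG, hDdec]
    have : Gmat_L * (Complex.exp (t * Complex.I) • E + C) * Gmat_R
        = Complex.exp (t * Complex.I) • (Gmat_L * E * Gmat_R) + Gmat_L * C * Gmat_R := by
      rw [Matrix.mul_add, Matrix.add_mul, Matrix.mul_smul, Matrix.smul_mul]
    rw [this, Matrix.add_mulVec, Matrix.smul_mulVec, dotProduct_add,
      dotProduct_smul, smul_eq_mul, hA, hB]
  -- derivative of f i
  have hexp : HasDerivAt (fun t : ℝ => Complex.exp (t * Complex.I))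
      (Complex.exp (θ * Complex.I) * Complex.I) θ := by
    have h1 := (Complex.ofRealCLM.hasDerivAt (x := θ)).mul_const Complex.I
    simpa using h1.cexp
  have hF : ∀ i, HasDerivAt (f i) (Complex.exp (θ * Complex.I) * Complex.I * A i) θ := by
    intro i
    have := (hexp.mul_const (A i)).add_const (B i)
    have heq : f i = fun t : ℝ => Complex.exp (t * Complex.I) * A i + B i := funext (hfdec i)
    rw [heq]; exact this
  -- derivative of ‖f i ·‖²
  have hsq : ∀ i, HasDerivAt (fun t => ‖f i t‖ ^ 2) (-2 * ψ i θ) θ := by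
    intro i
    have := normSq_hasDerivAt (hF i)
    convert this using 1
    rw [hψ]
    have harg : (star h ⬝ᵥ (Gmat_L * Matrix.single n n 1 * Gmat_R).mulVec (v i)) = A i := by
      rw [hA, hE]
    rw [harg]
    have : (starRingEnd ℂ (f i θ)) * (Complex.exp (θ * Complex.I) * Complex.I * A i)
        = Complex.I * (Complex.exp (θ * Complex.I) * starRingEnd ℂ (f i θ) * A i) := by ring
    rw [this]
    simp [Complex.mul_re]
    ring
  -- numerator and denominator
  have hu : HasDerivAt (fun t => ‖f k t‖ ^ 2) (-2 * ψ k θ) θ := hsq k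
  have hw : HasDerivAt (fun t => ∑ i ∈ Finset.univ.erase k, ‖f i t‖ ^ 2 + σ2)
      (∑ i ∈ Finset.univ.erase k, (-2 * ψ i θ)) θ := by
    exact (HasDerivAt.fun_sum (fun i _ => hsq i)).add_const σ2
  have hwpos : (0:ℝ) < ∑ i ∈ Finset.univ.erase k, ‖f i θ‖ ^ 2 + σ2 := by
    have : (0:ℝ) ≤ ∑ i ∈ Finset.univ.erase k, ‖f i θ‖ ^ 2 :=
      Finset.sum_nonneg (fun i _ => by positivity)
    linarith
  have hwne : (∑ i ∈ Finset.univ.erase k, ‖f i θ‖ ^ 2 + σ2) ≠ 0 := ne_of_gt hwpos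
  have hdiv := hu.div hw hwne
  have hsum : ∑ i ∈ Finset.univ.erase k, (-2 * ψ i θ)
      = -2 * ∑ i ∈ Finset.univ.erase k, ψ i θ := by
    rw [Finset.mul_sum]
  rw [hsum] at hdiv
  have hγeq : γ = fun t => ‖f k t‖ ^ 2 / (∑ i ∈ Finset.univ.erase k, ‖f i t‖ ^ 2 + σ2) :=
    funext hγ
  have hval : 2 * ϱ θ * (γ θ * (∑ i ∈ Finset.univ.erase k, ψ i θ) - ψ k θ)
      = (-2 * ψ k θ * (∑ i ∈ Finset.univ.erase k, ‖f i θ‖ ^ 2 + σ2) -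
          ‖f k θ‖ ^ 2 * (-2 * ∑ i ∈ Finset.univ.erase k, ψ i θ)) /
        (∑ i ∈ Finset.univ.erase k, ‖f i θ‖ ^ 2 + σ2) ^ 2 := by
    rw [hϱ, hγ]
    generalize hW : (∑ i ∈ Finset.univ.erase k, ‖f i θ‖ ^ 2 + σ2) = W at hwne ⊢
    generalize (∑ i ∈ Finset.univ.erase k, ψ i θ) = S
    field_simp
    ring
  rw [hval, hγeq]
  exact hdiv
end

section
/- Fix a positive integer K, a vector h ∈ ℂ^N, vectors v_1,…,v_K ∈ ℂ^M, and σ² > 0. For θ ∈ ℝ define z(θ) = ( Σ_{k=1}^K |h^H G(θ) v_k|² + σ² ) / σ² and g(θ) = z(θ) − ln z(θ) − 1. Then g is differentiable at every θ ∈ ℝ with derivative g'(θ) = −(2/σ²) · (1 − 1/z(θ)) · Σ_{k=1}^K Im[ e^{iθ} · conj(h^H G(θ) v_k) · ( h^H G_L E_{n,n} G_R v_k ) ]. -/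
open Matrix Complex

private lemma diag_split {N : ℕ} (n : Fin N) (d : Fin N → ℂ) (e : ℂ) :
    Matrix.diagonal (fun j => if j = n then e else d j)
      = Matrix.diagonal (fun j => if j = n then 0 else d j) + e • Matrix.single n n 1 := by
  ext i j
  by_cases hij : i = j
  · subst hij
    by_cases hi : i = n
    · subst hi; simp [Matrix.diagonal_apply, Matrix.single]
    · simp [Matrix.diagonal_apply, Matrix.single, hi, Ne.symm hi]
  · simp only [Matrix.diagonal_apply_ne _ hij, Matrix.add_apply, Matrix.smul_apply,
      Matrix.single, Matrix.of_apply, smul_eq_mul]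
    rw [if_neg, mul_zero, add_zero]
    rintro ⟨h1, h2⟩; exact hij (h1.symm.trans h2)

private lemma key_deriv (a b : ℂ) (θ : ℝ) :
    HasDerivAt (fun θ : ℝ => ‖a + Complex.exp (θ * Complex.I) * b‖ ^ 2)
      (-2 * (Complex.exp (θ * Complex.I) * (starRingEnd ℂ) (a + Complex.exp (θ * Complex.I) * b) * b).im) θ := by
  have hexp : HasDerivAt (fun θ : ℝ => Complex.exp (θ * Complex.I))
      (Complex.exp (θ * Complex.I) * Complex.I) θ := by
    have : HasDerivAt (fun x : ℂ => Complex.exp (x * Complex.I))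
        (Complex.exp ((θ:ℂ) * Complex.I) * Complex.I) (θ:ℂ) := by
      simpa using ((hasDerivAt_id (θ:ℂ)).mul_const Complex.I).cexp
    exact this.comp_ofReal
  have hφ : HasDerivAt (fun θ : ℝ => a + Complex.exp (θ * Complex.I) * b)
      (Complex.exp (θ * Complex.I) * Complex.I * b) θ := (hexp.mul_const b).const_add a
  have hre : HasDerivAt (fun θ : ℝ => (a + Complex.exp (θ * Complex.I) * b).re)
      (Complex.exp (θ * Complex.I) * Complex.I * b).re θ :=
    Complex.reCLM.hasFDerivAt.comp_hasDerivAt θ hφ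
  have him : HasDerivAt (fun θ : ℝ => (a + Complex.exp (θ * Complex.I) * b).im)
      (Complex.exp (θ * Complex.I) * Complex.I * b).im θ :=
    Complex.imCLM.hasFDerivAt.comp_hasDerivAt θ hφ
  have key := (hre.mul hre).add (him.mul him)
  have heq : (fun θ : ℝ => ‖a + Complex.exp (θ * Complex.I) * b‖ ^ 2)
      = fun θ : ℝ => (a + Complex.exp (θ * Complex.I) * b).re * (a + Complex.exp (θ * Complex.I) * b).re
        + (a + Complex.exp (θ * Complex.I) * b).im * (a + Complex.exp (θ * Complex.I) * b).im := by
    funext t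
    rw [← Complex.normSq_apply, ← Complex.sq_norm]
  rw [heq]
  refine HasDerivAt.congr_deriv key ?_
  simp [Complex.mul_im, Complex.mul_re]
  ring

/-- Equation (36) of the paper: derivative of the warden KL-divergence term
g(θ) = z(θ) − ln z(θ) − 1 with respect to a single SIM phase shift. -/
theorem warden_kl_deriv {N M : ℕ} (hN : 0 < N) (hM : 0 < M) (n : Fin N)
    (d : Fin N → ℂ) (Gmat_L : Matrix (Fin N) (Fin N) ℂ) (Gmat_R : Matrix (Fin N) (Fin M) ℂ)
    (D : ℝ → Matrix (Fin N) (Fin N) ℂ)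
    (hD : ∀ θ, D θ =
      Matrix.diagonal (fun j => if j = n then Complex.exp (θ * Complex.I) else d j))
    (G : ℝ → Matrix (Fin N) (Fin M) ℂ)
    (hG : ∀ θ, G θ = Gmat_L * D θ * Gmat_R)
    {K : ℕ} (hK : 0 < K) (h : Fin N → ℂ) (v : Fin K → Fin M → ℂ)
    (σ2 : ℝ) (hσ : 0 < σ2)
    (z : ℝ → ℝ)
    (hz : ∀ θ, z θ =
      (∑ i : Fin K, ‖star h ⬝ᵥ (G θ).mulVec (v i)‖ ^ 2 + σ2) / σ2)
    (g : ℝ → ℝ)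
    (hg : ∀ θ, g θ = z θ - Real.log (z θ) - 1)
    (θ : ℝ) :
    HasDerivAt g
      (-(2 / σ2) * (1 - 1 / z θ) *
        ∑ i : Fin K,
          (Complex.exp (θ * Complex.I) * starRingEnd ℂ (star h ⬝ᵥ (G θ).mulVec (v i)) *
            (star h ⬝ᵥ (Gmat_L * Matrix.single n n 1 * Gmat_R).mulVec (v i))).im) θ := by
  -- the constant parts
  set D0 : Matrix (Fin N) (Fin N) ℂ := Matrix.diagonal (fun j => if j = n then 0 else d j) with hD0
  set a : Fin K → ℂ := fun i => star h ⬝ᵥ (Gmat_L * D0 * Gmat_R).mulVec (v i) with ha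
  set b : Fin K → ℂ := fun i =>
    star h ⬝ᵥ (Gmat_L * Matrix.single n n 1 * Gmat_R).mulVec (v i) with hb
  have hf : ∀ (t : ℝ) (i : Fin K),
      star h ⬝ᵥ (G t).mulVec (v i) = a i + Complex.exp (t * Complex.I) * b i := by
    intro t i
    rw [hG, hD, diag_split n d]
    simp only [mul_add, Matrix.add_mul, Matrix.mul_smul, Matrix.smul_mul, Matrix.add_mulVec,
      Matrix.smul_mulVec, dotProduct_add, dotProduct_smul, smul_eq_mul, ha, hb]
    rfl
  -- derivative of z
  have hzpos : ∀ t, 0 < z t := by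
    intro t
    rw [hz]
    have : (0:ℝ) ≤ ∑ i : Fin K, ‖star h ⬝ᵥ (G t).mulVec (v i)‖ ^ 2 :=
      Finset.sum_nonneg fun i _ => by positivity
    positivity
  have hzdiff : HasDerivAt z
      ((∑ i : Fin K, -2 * (Complex.exp (θ * Complex.I) *
        (starRingEnd ℂ) (a i + Complex.exp (θ * Complex.I) * b i) * b i).im) / σ2) θ := by
    have hs : HasDerivAt (fun t : ℝ => ∑ i : Fin K, ‖a i + Complex.exp (t * Complex.I) * b i‖ ^ 2)
        (∑ i : Fin K, -2 * (Complex.exp (θ * Complex.I) *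
          (starRingEnd ℂ) (a i + Complex.exp (θ * Complex.I) * b i) * b i).im) θ :=
      HasDerivAt.fun_sum fun i _ => key_deriv (a i) (b i) θ
    have hthis := (hs.add_const σ2).div_const σ2
    have hzeq : z = fun t : ℝ =>
        (∑ i : Fin K, ‖a i + Complex.exp (t * Complex.I) * b i‖ ^ 2 + σ2) / σ2 := by
      funext t
      rw [hz]
      congr 2
      exact Finset.sum_congr rfl fun i _ => by rw [hf t i]
    rwa [← hzeq] at hthis
  -- derivative of g
  set z' := (∑ i : Fin K, -2 * (Complex.exp (θ * Complex.I) *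
    (starRingEnd ℂ) (a i + Complex.exp (θ * Complex.I) * b i) * b i).im) / σ2 with hz'
  have hgdiff : HasDerivAt g (z' - z' / z θ) θ := by
    have hlog := (Real.hasDerivAt_log (ne_of_gt (hzpos θ))).comp θ hzdiff
    have := (hzdiff.sub hlog).sub_const 1
    have hfun : g = fun t => z t - Real.log (z t) - 1 := funext hg
    rw [hfun]
    simpa [div_eq_mul_inv, mul_comm] using this
  convert hgdiff using 1
  rw [hz']
  have hrw : ∀ i : Fin K,
      (Complex.exp (θ * Complex.I) * starRingEnd ℂ (star h ⬝ᵥ (G θ).mulVec (v i)) *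
        (star h ⬝ᵥ (Gmat_L * Matrix.single n n 1 * Gmat_R).mulVec (v i))).im
      = (Complex.exp (θ * Complex.I) *
        (starRingEnd ℂ) (a i + Complex.exp (θ * Complex.I) * b i) * b i).im := by
    intro i
    rw [hf θ i]
  rw [Finset.sum_congr rfl fun i _ => hrw i, ← Finset.mul_sum]
  set S := ∑ i : Fin K, (Complex.exp (θ * Complex.I) *
    (starRingEnd ℂ) (a i + Complex.exp (θ * Complex.I) * b i) * b i).im with hS
  have hzne : z θ ≠ 0 := ne_of_gt (hzpos θ)
  field_simp
  ring
end

section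
/- Let c₀, c ∈ ℂ, ω₀ > 0, and let ρ, s, ϖ ∈ ℝ with 0 < s ≤ ϖ. If −(|c₀|²/ω₀²)·ϖ + (2/ω₀)·Re[conj(c₀)·c] ≥ ρ, then |c|²/s ≥ ρ. -/
/-- Correctness of the SCA surrogate constraints (22c)–(22d) of the paper. -/
theorem sca_surrogate_correct (c₀ c : ℂ) (ω₀ : ℝ) (hω₀ : 0 < ω₀)
    (ρ s ϖ : ℝ) (hs : 0 < s) (hsϖ : s ≤ ϖ)
    (hsurr : -(‖c₀‖ ^ 2 / ω₀ ^ 2) * ϖ + (2 / ω₀) * ((starRingEnd ℂ) c₀ * c).re ≥ ρ) :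
    ‖c‖ ^ 2 / s ≥ ρ := by
  have hc : ‖c‖ ^ 2 = c.re ^ 2 + c.im ^ 2 := by
    rw [Complex.sq_norm, Complex.normSq_apply]; ring
  have hc0 : ‖c₀‖ ^ 2 = c₀.re ^ 2 + c₀.im ^ 2 := by
    rw [Complex.sq_norm, Complex.normSq_apply]; ring
  have hr : ((starRingEnd ℂ) c₀ * c).re = c₀.re * c.re + c₀.im * c.im := by
    simp [Complex.mul_re]
  rw [hc0, hr] at hsurr
  rw [ge_iff_le, le_div_iff₀ hs, hc]
  have key : 0 ≤ (ω₀ * c.re - ϖ * c₀.re) ^ 2 + (ω₀ * c.im - ϖ * c₀.im) ^ 2 := by positivity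
  have hϖ : 0 < ϖ := lt_of_lt_of_le hs hsϖ
  -- from hsurr: ρ * ω₀^2 * ϖ ≤ -(c₀.re^2+c₀.im^2) * ϖ^2 + 2 * ω₀ * ϖ * r ≤ ω₀^2 * ‖c‖^2
  have h1 : ρ * ω₀ ^ 2 * ϖ ≤ ω₀ ^ 2 * (c.re ^ 2 + c.im ^ 2) := by
    have h2 : ρ * ω₀ ^ 2 ≤ -(c₀.re ^ 2 + c₀.im ^ 2) * ϖ + 2 * ω₀ * (c₀.re * c.re + c₀.im * c.im) := by
      have hne : ω₀ ≠ 0 := hω₀.ne'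
      rw [ge_iff_le] at hsurr
      have heq : -((c₀.re ^ 2 + c₀.im ^ 2) / ω₀ ^ 2) * ϖ + 2 / ω₀ * (c₀.re * c.re + c₀.im * c.im)
          = (-(c₀.re ^ 2 + c₀.im ^ 2) * ϖ + 2 * ω₀ * (c₀.re * c.re + c₀.im * c.im)) / ω₀ ^ 2 := by
        field_simp
      rw [heq, le_div_iff₀ (by positivity)] at hsurr
      linarith
    nlinarith [mul_le_mul_of_nonneg_right h2 hϖ.le, key]
  rcases le_or_gt ρ 0 with hρ | hρ
  · nlinarith
  · have : ρ * ϖ ≤ c.re ^ 2 + c.im ^ 2 := by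
      have hω2 : 0 < ω₀ ^ 2 := by positivity
      nlinarith
    nlinarith
end
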